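/- Let E be a finite-dimensional real inner product space. Let T : E → E be quasi-nonexpansive with fix(T) ≠ ∅, and let T₂ : E → E be an operator such that Id − T₂ is demiclosed at 0 and fix(T₂) ⊆ fix(T). Assume there exists γ > 0 such that for every ω* ∈ fix(T) and every ω ∈ E, ‖T ω − ω*‖² ≤ ‖ω − ω*‖² − γ ‖ω − T₂ ω‖². Then T is quasi-shrinking on every compact convex set C ⊆ E with C ∩ fix(T) ≠ ∅. -/

import Mathlib

open Metric Filter Topology

variable {E : Type*} [NormedAddCommGroup E] [InnerProductSpace ℝ E] [FiniteDimensional ℝ E]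

/-- The fixed-point set of an operator. -/
def fixSet (T : E → E) : Set E := {x | T x = x}

/-- The shrinkage function of `T` on `C`. -/
noncomputable def shrinkage (T : E → E) (C : Set E) (r : ℝ) : EReal :=
  ⨅ x ∈ {y ∈ C | r ≤ Metric.infDist y (fixSet T)},
    ((Metric.infDist x (fixSet T) - Metric.infDist (T x) (fixSet T) : ℝ) : EReal)

/-- Lemma 1: let `T` be quasi-nonexpansive with nonempty fixed-point set, let `T₂` be such
that `Id - T₂` is demiclosed at `0` and `fix T₂ ⊆ fix T`, and suppose the Fejér-type
inequality `‖T ω - ω*‖² ≤ ‖ω - ω*‖² - γ ‖ω - T₂ ω‖²` holds for some `γ > 0`.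
Then `T` is quasi-shrinking on every compact convex set `C` meeting `fix T`. -/
theorem quasi_shrinking_of_demiclosed
    (T T₂ : E → E)
    (hfixne : (fixSet T).Nonempty)
    (hqne : ∀ z ∈ fixSet T, ∀ x : E, ‖T x - z‖ ≤ ‖x - z‖)
    (hdemi : ∀ (x : ℕ → E) (xlim : E), Tendsto x atTop (𝓝 xlim) →
      Tendsto (fun k => x k - T₂ (x k)) atTop (𝓝 (0 : E)) → xlim - T₂ xlim = 0)
    (hsub : fixSet T₂ ⊆ fixSet T)
    (γ : ℝ) (hγ : 0 < γ)
    (hineq : ∀ ωs ∈ fixSet T, ∀ ω : E,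
      ‖T ω - ωs‖ ^ 2 ≤ ‖ω - ωs‖ ^ 2 - γ * ‖ω - T₂ ω‖ ^ 2) :
    ∀ C : Set E, IsCompact C → Convex ℝ C → (C ∩ fixSet T).Nonempty →
      ∀ r : ℝ, 0 ≤ r → (shrinkage T C r = 0 ↔ r = 0) := by
  intro C hC _hconv hCF r hr
  set F := fixSet T with hFdef
  have hF : F.Nonempty := hfixne
  haveI : Nonempty F := hF.to_subtype
  have hmono : ∀ x : E, infDist (T x) F ≤ infDist x F := by
    intro x
    conv_rhs => rw [Metric.infDist_eq_iInf]
    apply le_ciInf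
    intro z
    calc infDist (T x) F ≤ dist (T x) z := infDist_le_dist_of_mem z.2
      _ ≤ dist x z := by rw [dist_eq_norm, dist_eq_norm]; exact hqne z z.2 x
  constructor
  · intro hshr
    by_contra hr0
    have hrpos : 0 < r := lt_of_le_of_ne hr (Ne.symm hr0)
    obtain ⟨z₀, hz₀C, hz₀F⟩ := hCF
    have hCb : Bornology.IsBounded C := hC.isBounded
    set M := Metric.diam C with hM
    have hM0 : 0 ≤ M := Metric.diam_nonneg
    have hdbound : ∀ x ∈ C, infDist x F ≤ M := fun x hx =>
      (infDist_le_dist_of_mem hz₀F).trans (dist_le_diam_of_mem hCb hx hz₀C)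
    -- extract an approximating sequence
    have hseq : ∀ k : ℕ, ∃ x, x ∈ C ∧ r ≤ infDist x F ∧
        infDist x F - infDist (T x) F < 1 / (k + 1) := by
      intro k
      have hck : (0 : EReal) < ((1 / (k + 1) : ℝ) : EReal) := by
        rw [show (0 : EReal) = ((0 : ℝ) : EReal) by simp, EReal.coe_lt_coe_iff]
        positivity
      have hlt : shrinkage T C r < ((1 / (k + 1) : ℝ) : EReal) := hshr ▸ hck
      rw [shrinkage, iInf_lt_iff] at hlt
      obtain ⟨x, hx⟩ := hlt
      rw [iInf_lt_iff] at hx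
      obtain ⟨hxS, hx⟩ := hx
      exact ⟨x, hxS.1, hxS.2, EReal.coe_lt_coe_iff.mp hx⟩
    choose x hxC hxr hxs using hseq
    -- show ‖x k - T₂ (x k)‖ → 0
    have hub : ∀ k : ℕ, γ * ‖x k - T₂ (x k)‖ ^ 2 ≤ 2 / (k + 1) * (2 * M + 1) := by
      intro k
      set d := infDist (x k) F with hd
      set d' := infDist (T (x k)) F with hd'
      have hεpos : (0 : ℝ) < 1 / (k + 1) := by positivity
      have hε1 : (1 : ℝ) / (k + 1) ≤ 1 := by
        rw [div_le_one (by positivity)]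
        have : (0 : ℝ) ≤ (k : ℝ) := Nat.cast_nonneg k
        linarith
      obtain ⟨w, hwF, hw⟩ : ∃ w ∈ F, dist (x k) w < d + 1 / (k + 1) :=
        (infDist_lt_iff hF).mp (by linarith)
      have h1 := hineq w hwF (x k)
      have h2 : ‖x k - w‖ < d + 1 / (k + 1) := by rwa [dist_eq_norm] at hw
      have h3 : d' ≤ ‖T (x k) - w‖ := by
        rw [← dist_eq_norm]; exact infDist_le_dist_of_mem hwF
      have hd'0 : 0 ≤ d' := infDist_nonneg
      have hdM : d ≤ M := hdbound _ (hxC k)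
      have hdd' : d - d' < 1 / (k + 1) := hxs k
      have hn1 : (0 : ℝ) ≤ ‖x k - w‖ := norm_nonneg _
      set ε : ℝ := 1 / (k + 1) with hεdef
      have e1 : ‖x k - w‖ ^ 2 ≤ (d + ε) ^ 2 := by nlinarith
      have e2 : d' ^ 2 ≤ ‖T (x k) - w‖ ^ 2 := by nlinarith
      have e3 : γ * ‖x k - T₂ (x k)‖ ^ 2 ≤ (d + ε) ^ 2 - d' ^ 2 := by linarith
      have hd'd : d' ≤ d := hmono (x k)
      have hd0 : (0 : ℝ) ≤ d := infDist_nonneg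
      have ha : d + ε - d' ≤ 2 * ε := by linarith
      have hb : d + ε + d' ≤ 2 * M + 1 := by linarith
      have hc : 0 ≤ d + ε + d' := by linarith
      have hd2 : 0 ≤ 2 * ε := by positivity
      have e4 := mul_le_mul ha hb hc hd2
      have e5 : (2 : ℝ) / (k + 1) = 2 * ε := by rw [hεdef]; ring
      rw [e5]
      nlinarith [e3, e4]
    have hsq : Tendsto (fun k : ℕ => γ * ‖x k - T₂ (x k)‖ ^ 2) atTop (𝓝 0) := by
      apply squeeze_zero (fun k => by positivity) hub
      have : Tendsto (fun k : ℕ => 2 / ((k : ℝ) + 1) * (2 * M + 1)) atTop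
          (𝓝 (2 * 0 * (2 * M + 1))) := by
        apply Tendsto.mul_const
        have := tendsto_one_div_add_atTop_nhds_zero_nat.const_mul (2 : ℝ)
        simpa [mul_one_div, div_eq_mul_inv] using this
      simpa using this
    have hsq2 : Tendsto (fun k : ℕ => ‖x k - T₂ (x k)‖ ^ 2) atTop (𝓝 0) := by
      have := hsq.const_mul (γ⁻¹)
      simpa [← mul_assoc, inv_mul_cancel₀ (ne_of_gt hγ)] using this
    have hnorm : Tendsto (fun k : ℕ => ‖x k - T₂ (x k)‖) atTop (𝓝 0) := by
      have hrt := (Real.continuous_sqrt.tendsto 0).comp hsq2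
      simp only [Function.comp_def, Real.sqrt_zero] at hrt
      convert hrt using 2 with k
      rw [Real.sqrt_sq (norm_nonneg _)]
    have hten : Tendsto (fun k : ℕ => x k - T₂ (x k)) atTop (𝓝 0) :=
      tendsto_zero_iff_norm_tendsto_zero.mpr hnorm
    obtain ⟨a, haC, φ, hφ, hlim⟩ := hC.tendsto_subseq hxC
    have hten' : Tendsto (fun k : ℕ => x (φ k) - T₂ (x (φ k))) atTop (𝓝 0) :=
      hten.comp hφ.tendsto_atTop
    have haT₂ : a - T₂ a = 0 := hdemi (fun k => x (φ k)) a hlim hten'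
    have haF : a ∈ F := hsub (sub_eq_zero.mp haT₂).symm
    have haz : infDist a F = 0 := infDist_zero_of_mem haF
    have hinf : Tendsto (fun k : ℕ => infDist (x (φ k)) F) atTop (𝓝 (infDist a F)) :=
      ((continuous_infDist_pt F).tendsto a).comp hlim
    have hra : r ≤ infDist a F :=
      ge_of_tendsto hinf (Filter.Eventually.of_forall fun k => hxr (φ k))
    rw [haz] at hra
    linarith
  · intro hr0
    subst hr0
    obtain ⟨z₀, hz₀C, hz₀F⟩ := hCF
    apply le_antisymm
    · have hmem : z₀ ∈ {y ∈ C | (0 : ℝ) ≤ infDist y F} := ⟨hz₀C, infDist_nonneg⟩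
      have := iInf₂_le (f := fun x (_ : x ∈ {y ∈ C | (0 : ℝ) ≤ infDist y F}) =>
        ((infDist x F - infDist (T x) F : ℝ) : EReal)) z₀ hmem
      rw [shrinkage]
      refine le_trans this ?_
      have hz : T z₀ = z₀ := hz₀F
      rw [hz, infDist_zero_of_mem hz₀F]
      simp
    · rw [shrinkage]
      refine le_iInf₂ fun x hx => ?_
      rw [show (0 : EReal) = ((0 : ℝ) : EReal) by simp, EReal.coe_le_coe_iff]
      have := hmono x
      linarith
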